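/- arXiv:1103.3991 — 2 statements merged into one kernel-verified Lean document; each statement's English description precedes it below -/
import Mathlib

section
/- Let G be a finite group, M a semi-Mackey functor on G, and 𝒮 ⊆ M a saturated semi-Mackey subfunctor (𝒮(X) is a saturated submonoid of M(X) for every X). Then for every finite G-set X, 𝒮(X) equals the saturation of pt_X^*(𝒮(G/G)) in M(X), where pt_X : X → G/G is the unique map to the one-point G-set. Consequently 𝒮 is determined by 𝒮(G/G). -/
/-- A finite `G`-set: a finite type equipped with a `G`-action. -/
structure FinGSet (G : Type) [Group G] where
  carrier : Type
  [fin : Fintype carrier]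
  [act : MulAction G carrier]

attribute [instance] FinGSet.fin FinGSet.act

/-- A map of `G`-sets is equivariant if it commutes with the action. -/
def IsEquivariant {G : Type} [Group G] {X Y : FinGSet G}
    (f : X.carrier → Y.carrier) : Prop :=
  ∀ (g : G) (x : X.carrier), f (g • x) = g • f x

/-- The disjoint union of two finite `G`-sets. -/
def FinGSet.sum {G : Type} [Group G] (X Y : FinGSet G) : FinGSet G where
  carrier := X.carrier ⊕ Y.carrier

/-- A semi-Mackey functor on `G` with underlying family of commutative monoids `N`:
a contravariant functor `res` (restriction) and a covariant functor `tr`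
(transfer) on finite `G`-sets, additive on disjoint unions and satisfying the
Mackey (base change) condition on all pullback diagrams. -/
structure SemiMackey (G : Type) [Group G] (N : FinGSet G → Type)
    [∀ X, CommMonoid (N X)] where
  res : ∀ {X Y : FinGSet G} (f : X.carrier → Y.carrier), IsEquivariant f → (N Y →* N X)
  tr : ∀ {X Y : FinGSet G} (f : X.carrier → Y.carrier), IsEquivariant f → (N X →* N Y)
  res_id : ∀ (X : FinGSet G) (h : IsEquivariant (id : X.carrier → X.carrier)) (m : N X),
    res id h m = m
  tr_id : ∀ (X : FinGSet G) (h : IsEquivariant (id : X.carrier → X.carrier)) (m : N X),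
    tr id h m = m
  res_comp : ∀ {X Y Z : FinGSet G} (f : X.carrier → Y.carrier) (hf : IsEquivariant f)
    (g : Y.carrier → Z.carrier) (hg : IsEquivariant g)
    (hgf : IsEquivariant (g ∘ f)) (m : N Z),
    res (g ∘ f) hgf m = res f hf (res g hg m)
  tr_comp : ∀ {X Y Z : FinGSet G} (f : X.carrier → Y.carrier) (hf : IsEquivariant f)
    (g : Y.carrier → Z.carrier) (hg : IsEquivariant g)
    (hgf : IsEquivariant (g ∘ f)) (m : N X),
    tr (g ∘ f) hgf m = tr g hg (tr f hf m)
  additive : ∀ (X Y : FinGSet G)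
    (h₁ : IsEquivariant (X := X) (Y := FinGSet.sum X Y) Sum.inl)
    (h₂ : IsEquivariant (X := Y) (Y := FinGSet.sum X Y) Sum.inr),
    Function.Bijective (fun m : N (FinGSet.sum X Y) => (res Sum.inl h₁ m, res Sum.inr h₂ m))
  mackey : ∀ {P X W Y : FinGSet G}
    (f : X.carrier → Y.carrier) (hf : IsEquivariant f)
    (g : W.carrier → Y.carrier) (hg : IsEquivariant g)
    (pX : P.carrier → X.carrier) (hpX : IsEquivariant pX)
    (pW : P.carrier → W.carrier) (hpW : IsEquivariant pW)
    (hcomm : ∀ p, f (pX p) = g (pW p)),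
    Function.Bijective
      (fun p : P.carrier =>
        (⟨(pX p, pW p), hcomm p⟩ : {q : X.carrier × W.carrier // f q.1 = g q.2})) →
    ∀ m : N W, res f hf (tr g hg m) = tr pX hpX (res pW hpW m)

/-- The saturation of a subset of a commutative monoid. -/
def satSet {M : Type*} [CommMonoid M] (S : Set M) : Set M :=
  {x | ∃ a : M, ∃ s ∈ S, a * x = s}

/-- The one-point `G`-set `G/G`. -/
def ptObj (G : Type) [Group G] : FinGSet G where
  carrier := PUnit
  act :=
    { smul := fun _ _ => PUnit.unit
      one_smul := fun _ => rfl
      mul_smul := fun _ _ _ => rfl }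

/-- The constant map `pt_X : X → G/G`. -/
def ptMap {G : Type} [Group G] (X : FinGSet G) : X.carrier → (ptObj G).carrier :=
  fun _ => PUnit.unit

theorem ptMap_equivariant {G : Type} [Group G] (X : FinGSet G) :
    IsEquivariant (ptMap X) := fun _ _ => rfl

section Aux

variable {G : Type} [Group G] {N : FinGSet G → Type} [∀ X, CommMonoid (N X)]
  (M : SemiMackey G N)

theorem IsEquivariant.comp' {X Y Z : FinGSet G} {f : X.carrier → Y.carrier}
    {g : Y.carrier → Z.carrier} (hg : IsEquivariant g) (hf : IsEquivariant f) :
    IsEquivariant (g ∘ f) := fun a x => by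
  simp only [Function.comp_apply]; rw [hf, hg]

theorem isEquivariant_id (X : FinGSet G) :
    IsEquivariant (id : X.carrier → X.carrier) := fun _ _ => rfl

theorem res_congr {X Y : FinGSet G} {f f' : X.carrier → Y.carrier}
    (hf : IsEquivariant f) (hf' : IsEquivariant f') (h : f = f') (m : N Y) :
    M.res f hf m = M.res f' hf' m := by subst h; rfl

theorem tr_congr {X Y : FinGSet G} {f f' : X.carrier → Y.carrier}
    (hf : IsEquivariant f) (hf' : IsEquivariant f') (h : f = f') (m : N X) :
    M.tr f hf m = M.tr f' hf' m := by subst h; rfl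

/-- The empty `G`-set. -/
def emptyG : FinGSet G where
  carrier := Empty
  act :=
    { smul := fun _ x => x
      one_smul := fun _ => rfl
      mul_smul := fun _ _ _ => rfl }

theorem emptyG_map_equivariant {Y : FinGSet G}
    (f : (emptyG (G := G)).carrier → Y.carrier) : IsEquivariant f :=
  fun _ x => Empty.elim x

include M in
/-- Every element of `N(∅)` is `1`. -/
theorem empty_val_eq_one (n : N (emptyG (G := G))) : n = 1 := by
  have h₁ : IsEquivariant (X := emptyG (G := G))
      (Y := FinGSet.sum emptyG emptyG) Sum.inl := fun a x => Empty.elim x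
  have h₂ : IsEquivariant (X := emptyG (G := G))
      (Y := FinGSet.sum emptyG emptyG) Sum.inr := fun a x => Empty.elim x
  have hadd := M.additive emptyG emptyG h₁ h₂
  have key : ∀ m : N (FinGSet.sum (emptyG (G := G)) emptyG),
      M.res Sum.inl h₁ m = M.res Sum.inr h₂ m := by
    intro m
    set ψinv : (FinGSet.sum (emptyG (G := G)) emptyG).carrier →
        (emptyG (G := G)).carrier := fun b =>
      Sum.rec (fun x => Empty.elim x) (fun x => Empty.elim x) b with hψdef
    have hψinv : IsEquivariant ψinv := fun a b => by
      rcases b with x | x <;> exact Empty.elim x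
    have hψ : IsEquivariant (X := FinGSet.sum emptyG emptyG) (Y := FinGSet.sum emptyG emptyG)
        (Sum.inr ∘ ψinv) := IsEquivariant.comp' (Y := emptyG) h₂ hψinv
    have hiso : (Sum.inr ∘ ψinv) = id := by
      funext b; rcases b with x | x <;> exact Empty.elim x
    -- res ψinv (res inr m) = m
    have hm : M.res ψinv hψinv (M.res Sum.inr h₂ m) = m := by
      have hc := M.res_comp ψinv hψinv Sum.inr h₂ hψ m
      rw [← hc, res_congr M hψ (isEquivariant_id _) hiso m, M.res_id]
    -- ψinv ∘ inl = id (both are maps out of the empty type)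
    have hcl : IsEquivariant (ψinv ∘ Sum.inl) := IsEquivariant.comp' hψinv h₁
    have hcl_id : (ψinv ∘ Sum.inl) = id := by
      funext x; exact Empty.elim x
    have hc2 := M.res_comp Sum.inl h₁ ψinv hψinv hcl (M.res Sum.inr h₂ m)
    rw [res_congr M hcl (isEquivariant_id _) hcl_id, M.res_id, hm] at hc2
    exact hc2.symm
  obtain ⟨m, hm⟩ := hadd.surjective (n, 1)
  simp only [Prod.mk.injEq] at hm
  rw [← hm.1, key m, hm.2]

/-- `res f (tr f m) = m` for an injective equivariant `f`. -/
theorem res_tr_of_injective {A C : FinGSet G} (f : A.carrier → C.carrier)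
    (hf : IsEquivariant f) (hinj : Function.Injective f) (m : N A) :
    M.res f hf (M.tr f hf m) = m := by
  have hbij : Function.Bijective
      (fun p : A.carrier =>
        (⟨(id p, id p), rfl⟩ : {q : A.carrier × A.carrier // f q.1 = f q.2})) := by
    constructor
    · intro a b hab
      simpa using congrArg (fun z => z.1.1) hab
    · rintro ⟨⟨a, b⟩, hq⟩
      exact ⟨a, Subtype.ext (Prod.ext rfl (hinj hq))⟩
  have := M.mackey f hf f hf id (isEquivariant_id A) id (isEquivariant_id A)
    (fun p => rfl) hbij m
  rw [this, M.res_id, M.tr_id]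

/-- `res f (tr g m) = 1` when `f` and `g` have disjoint images. -/
theorem res_tr_of_disjoint {A B C : FinGSet G} (f : A.carrier → C.carrier)
    (hf : IsEquivariant f) (g : B.carrier → C.carrier) (hg : IsEquivariant g)
    (hdisj : ∀ a b, f a ≠ g b) (m : N B) :
    M.res f hf (M.tr g hg m) = 1 := by
  have hbij : Function.Bijective
      (fun p : (emptyG (G := G)).carrier =>
        (⟨((fun x => Empty.elim x : (emptyG (G := G)).carrier → A.carrier) p,
           (fun x => Empty.elim x : (emptyG (G := G)).carrier → B.carrier) p),
           Empty.elim p⟩ : {q : A.carrier × B.carrier // f q.1 = g q.2})) := by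
    constructor
    · intro p; exact Empty.elim p
    · rintro ⟨⟨a, b⟩, hq⟩; exact absurd hq (hdisj a b)
  have := M.mackey f hf g hg _ (emptyG_map_equivariant _) _ (emptyG_map_equivariant _)
    (fun p => Empty.elim p) hbij m
  rw [this, empty_val_eq_one M (M.res _ _ m), map_one]

/-- Decomposition of any element of `N (A ⊔ B)`. -/
theorem sum_decomp {A B : FinGSet G}
    (h₁ : IsEquivariant (X := A) (Y := FinGSet.sum A B) Sum.inl)
    (h₂ : IsEquivariant (X := B) (Y := FinGSet.sum A B) Sum.inr)
    (m : N (FinGSet.sum A B)) :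
    m = M.tr Sum.inl h₁ (M.res Sum.inl h₁ m) * M.tr Sum.inr h₂ (M.res Sum.inr h₂ m) := by
  apply (M.additive A B h₁ h₂).injective
  have hinl : Function.Injective (Sum.inl : A.carrier → (FinGSet.sum A B).carrier) :=
    fun a b h => by injection h
  have hinr : Function.Injective (Sum.inr : B.carrier → (FinGSet.sum A B).carrier) :=
    fun a b h => by injection h
  have d1 : ∀ (a : A.carrier) (b : B.carrier),
      (Sum.inl a : (FinGSet.sum A B).carrier) ≠ Sum.inr b := fun a b h => by injection h
  have d2 : ∀ (b : B.carrier) (a : A.carrier),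
      (Sum.inr b : (FinGSet.sum A B).carrier) ≠ Sum.inl a := fun a b h => by injection h
  simp only [Prod.mk.injEq, map_mul]
  rw [res_tr_of_injective (C := FinGSet.sum A B) M Sum.inl h₁ hinl,
    res_tr_of_injective (C := FinGSet.sum A B) M Sum.inr h₂ hinr,
    res_tr_of_disjoint (C := FinGSet.sum A B) M Sum.inl h₁ Sum.inr h₂ d1,
    res_tr_of_disjoint (C := FinGSet.sum A B) M Sum.inr h₂ Sum.inl h₁ d2]
  constructor <;> [skip; rw [mul_comm]] <;> rw [mul_one]

/-- Transfer out of a disjoint union splits as a product. -/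
theorem tr_sum {A B Y : FinGSet G}
    (h₁ : IsEquivariant (X := A) (Y := FinGSet.sum A B) Sum.inl)
    (h₂ : IsEquivariant (X := B) (Y := FinGSet.sum A B) Sum.inr)
    (h : (FinGSet.sum A B).carrier → Y.carrier) (hh : IsEquivariant h)
    (m : N (FinGSet.sum A B)) :
    M.tr h hh m
      = M.tr (h ∘ Sum.inl) (IsEquivariant.comp' hh h₁) (M.res Sum.inl h₁ m)
        * M.tr (h ∘ Sum.inr) (IsEquivariant.comp' hh h₂) (M.res Sum.inr h₂ m) := by
  conv_lhs => rw [sum_decomp M h₁ h₂ m]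
  rw [map_mul, ← M.tr_comp Sum.inl h₁ h hh (IsEquivariant.comp' hh h₁),
    ← M.tr_comp Sum.inr h₂ h hh (IsEquivariant.comp' hh h₂)]

/-- For an equivariant bijection `φ`, `tr φ (res φ n) = n`. -/
theorem tr_res_of_bijective {A C : FinGSet G} (φ : A.carrier → C.carrier)
    (hφ : IsEquivariant φ) (hbij : Function.Bijective φ) (n : N C) :
    M.tr φ hφ (M.res φ hφ n) = n := by
  let e := Equiv.ofBijective φ hbij
  have hinv : IsEquivariant (e.symm : C.carrier → A.carrier) := by
    intro g c
    apply hbij.injective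
    have : φ (e.symm c) = c := e.apply_symm_apply c
    calc φ (e.symm (g • c)) = g • c := e.apply_symm_apply _
      _ = g • φ (e.symm c) := by rw [this]
      _ = φ (g • e.symm c) := (hφ g _).symm
  -- res e.symm (res φ k) = k  (since φ ∘ e.symm = id)
  have hcomp : IsEquivariant ((φ ∘ (e.symm : C.carrier → A.carrier))
      : C.carrier → C.carrier) := IsEquivariant.comp' hφ hinv
  have hiso : (φ ∘ (e.symm : C.carrier → A.carrier)) = id := by
    funext c; exact e.apply_symm_apply c
  have hres_inv : ∀ k : N C,
      M.res (e.symm : C.carrier → A.carrier) hinv (M.res φ hφ k) = k := by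
    intro k
    have hc := M.res_comp (e.symm : C.carrier → A.carrier) hinv φ hφ hcomp k
    rw [← hc, res_congr M hcomp (isEquivariant_id C) hiso, M.res_id]
  -- res φ (tr φ m) = m
  have hrt : ∀ m : N A, M.res φ hφ (M.tr φ hφ m) = m :=
    fun m => res_tr_of_injective M φ hφ hbij.injective m
  -- hence tr φ m = res e.symm m
  have htr_eq : ∀ m : N A, M.tr φ hφ m
      = M.res (e.symm : C.carrier → A.carrier) hinv m := by
    intro m
    conv_rhs => rw [← hrt m]
    exact (hres_inv (M.tr φ hφ m)).symm
  rw [htr_eq, hres_inv]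

/-- The product `G`-set `X × X` with the diagonal action. -/
def prodG (X : FinGSet G) : FinGSet G where
  carrier := X.carrier × X.carrier

/-- The off-diagonal part of `X × X`. -/
noncomputable def offDiagG (X : FinGSet G) : FinGSet G where
  carrier := {p : X.carrier × X.carrier // p.1 ≠ p.2}
  fin := by
    classical
    exact Subtype.fintype _
  act :=
    { smul := fun g p => ⟨g • p.val, fun h => p.2 (MulAction.injective g h)⟩
      one_smul := fun p => Subtype.ext (one_smul G p.val)
      mul_smul := fun g h p => Subtype.ext (mul_smul g h p.val) }

/-- The canonical bijection `X ⊔ (X × X ∖ Δ) ≃ X × X`. -/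
def sumToProd (X : FinGSet G) :
    (FinGSet.sum X (offDiagG X)).carrier → (prodG X).carrier :=
  fun b => Sum.rec (fun a => (a, a)) (fun p => Subtype.val p) b

theorem sumToProd_equivariant (X : FinGSet G) : IsEquivariant (sumToProd X) :=
  fun g b => by rcases b with a | p <;> rfl

theorem sumToProd_bijective (X : FinGSet G) : Function.Bijective (sumToProd X) := by
  constructor
  · intro b b' h
    rcases b with a | p <;> rcases b' with a' | p'
    · exact congrArg Sum.inl (congrArg Prod.fst h)
    · have h' : ((a, a) : X.carrier × X.carrier) = Subtype.val p' := h
      exact absurd (show (Subtype.val p').1 = (Subtype.val p').2 by rw [← h'])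
        (Subtype.prop p')
    · have h' : Subtype.val p = ((a', a') : X.carrier × X.carrier) := h
      exact absurd (show (Subtype.val p).1 = (Subtype.val p).2 by rw [h'])
        (Subtype.prop p)
    · exact congrArg Sum.inr (Subtype.ext h)
  · intro q
    by_cases h : q.1 = q.2
    · exact ⟨Sum.inl q.1, Prod.ext rfl h⟩
    · exact ⟨Sum.inr ⟨q, h⟩, rfl⟩

include M in
/-- The key computation: a saturated subfunctor is the saturation of its
value at the point. -/
theorem sat_key (S : ∀ X : FinGSet G, Submonoid (N X))
    (hres : ∀ {X Y : FinGSet G} (f : X.carrier → Y.carrier) (hf : IsEquivariant f),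
      ∀ s ∈ S Y, M.res f hf s ∈ S X)
    (htr : ∀ {X Y : FinGSet G} (f : X.carrier → Y.carrier) (hf : IsEquivariant f),
      ∀ s ∈ S X, M.tr f hf s ∈ S Y)
    (hsat : ∀ X : FinGSet G, satSet (S X : Set (N X)) = (S X : Set (N X)))
    (X : FinGSet G) :
    (S X : Set (N X))
      = satSet ((M.res (ptMap X) (ptMap_equivariant X)) '' (S (ptObj G) : Set _)) := by
  ext x
  constructor
  · intro hx
    -- Notation
    have hfst : IsEquivariant (X := prodG X) (Y := X)
        (Prod.fst : X.carrier × X.carrier → X.carrier) :=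
      fun g p => rfl
    have hsnd : IsEquivariant (X := prodG X) (Y := X)
        (Prod.snd : X.carrier × X.carrier → X.carrier) :=
      fun g p => rfl
    have h₁ : IsEquivariant (X := X) (Y := FinGSet.sum X (offDiagG X))
        (Sum.inl : X.carrier → X.carrier ⊕ (offDiagG X).carrier) :=
      fun g a => rfl
    have h₂ : IsEquivariant (X := offDiagG X) (Y := FinGSet.sum X (offDiagG X))
        (Sum.inr : (offDiagG X).carrier → X.carrier ⊕ (offDiagG X).carrier) :=
      fun g a => rfl
    have hφ := sumToProd_equivariant X
    have hbijφ := sumToProd_bijective X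
    have hcompfst : IsEquivariant ((Prod.fst : (prodG X).carrier → X.carrier) ∘ sumToProd X) :=
      IsEquivariant.comp' hfst hφ
    have hinlφ : IsEquivariant (sumToProd X ∘
        (Sum.inl : X.carrier → (FinGSet.sum X (offDiagG X)).carrier)) :=
      IsEquivariant.comp' hφ h₁
    have hsndinlφ : IsEquivariant ((Prod.snd ∘ (sumToProd X ∘ Sum.inl)) :
        X.carrier → X.carrier) := IsEquivariant.comp' hsnd hinlφ
    -- The Mackey double coset formula for the square with both maps `pt`
    have hbijP : Function.Bijective
        (fun p : (prodG X).carrier =>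
          (⟨(Prod.fst p, Prod.snd p), rfl⟩ :
            {q : X.carrier × X.carrier // ptMap X q.1 = ptMap X q.2})) := by
      constructor
      · intro p q h
        exact congrArg Subtype.val h
      · rintro ⟨⟨a, b⟩, hq⟩
        exact ⟨(a, b), rfl⟩
    have hmack := M.mackey (P := prodG X) (ptMap X) (ptMap_equivariant X) (ptMap X) (ptMap_equivariant X)
      Prod.fst hfst Prod.snd hsnd (fun p => rfl) hbijP x
    -- Split the transfer along the decomposition X ⊔ offDiag ≃ X × X
    have e1 : M.tr (X := prodG X) Prod.fst hfst (M.res (X := prodG X) Prod.snd hsnd x)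
        = M.tr (Prod.fst ∘ sumToProd X) hcompfst
            (M.res (sumToProd X) hφ (M.res (X := prodG X) Prod.snd hsnd x)) := by
      conv_lhs => rw [← tr_res_of_bijective M (sumToProd X) hφ hbijφ
        (M.res Prod.snd hsnd x)]
      rw [← M.tr_comp (sumToProd X) hφ Prod.fst hfst hcompfst]
      rfl
    have e2 := tr_sum M h₁ h₂ (Prod.fst ∘ sumToProd X) hcompfst
      (M.res (sumToProd X) hφ (M.res Prod.snd hsnd x))
    -- The diagonal piece restricts back to x
    have e3 : M.res Sum.inl h₁ (M.res (sumToProd X) hφ (M.res Prod.snd hsnd x)) = x := by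
      rw [← M.res_comp Sum.inl h₁ (sumToProd X) hφ hinlφ,
        ← M.res_comp (sumToProd X ∘ Sum.inl) hinlφ Prod.snd hsnd hsndinlφ]
      exact (res_congr M hsndinlφ (isEquivariant_id X) (funext fun a => rfl) x).trans
        (M.res_id _ _ x)
    have e4 : M.tr ((Prod.fst ∘ sumToProd X) ∘ Sum.inl) (IsEquivariant.comp' hcompfst h₁)
        (M.res Sum.inl h₁ (M.res (sumToProd X) hφ (M.res Prod.snd hsnd x))) = x := by
      rw [e3, tr_congr M (IsEquivariant.comp' hcompfst h₁) (isEquivariant_id X)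
        (funext fun a => rfl) x, M.tr_id]
    -- Assemble: res pt (tr pt x) = x * B
    have hchain : M.res (ptMap X) (ptMap_equivariant X)
        (M.tr (ptMap X) (ptMap_equivariant X) x)
        = x * M.tr ((Prod.fst ∘ sumToProd X) ∘ Sum.inr) (IsEquivariant.comp' hcompfst h₂)
            (M.res Sum.inr h₂ (M.res (sumToProd X) hφ (M.res Prod.snd hsnd x))) := by
      rw [hmack, e1, e2, e4]
    refine ⟨M.tr ((Prod.fst ∘ sumToProd X) ∘ Sum.inr) (IsEquivariant.comp' hcompfst h₂)
        (M.res Sum.inr h₂ (M.res (sumToProd X) hφ (M.res Prod.snd hsnd x))),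
      M.res (ptMap X) (ptMap_equivariant X) (M.tr (ptMap X) (ptMap_equivariant X) x),
      ⟨M.tr (ptMap X) (ptMap_equivariant X) x,
        htr (ptMap X) (ptMap_equivariant X) x hx, rfl⟩, ?_⟩
    rw [hchain, mul_comm]
  · rintro ⟨a, s, ⟨t, ht, rfl⟩, hax⟩
    have hmem : x ∈ satSet (S X : Set (N X)) :=
      ⟨a, M.res (ptMap X) (ptMap_equivariant X) t,
        hres (ptMap X) (ptMap_equivariant X) t ht, hax⟩
    rwa [hsat X] at hmem

end Aux


/-- A saturated semi-Mackey subfunctor `𝒮 ⊆ M` satisfies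
`𝒮(X) = (pt_X^*(𝒮(G/G)))~` for every finite `G`-set `X`; consequently a
saturated subfunctor is determined by its value at `G/G`. -/
theorem semiMackey_saturated_subfunctor_determined {G : Type} [Group G]
    {N : FinGSet G → Type} [∀ X, CommMonoid (N X)] (M : SemiMackey G N)
    (S : ∀ X : FinGSet G, Submonoid (N X))
    (hres : ∀ {X Y : FinGSet G} (f : X.carrier → Y.carrier) (hf : IsEquivariant f),
      ∀ s ∈ S Y, M.res f hf s ∈ S X)
    (htr : ∀ {X Y : FinGSet G} (f : X.carrier → Y.carrier) (hf : IsEquivariant f),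
      ∀ s ∈ S X, M.tr f hf s ∈ S Y)
    (hsat : ∀ X : FinGSet G, satSet (S X : Set (N X)) = (S X : Set (N X))) :
    (∀ X : FinGSet G,
      (S X : Set (N X))
        = satSet ((M.res (ptMap X) (ptMap_equivariant X)) '' (S (ptObj G) : Set _))) ∧
    (∀ S' : ∀ X : FinGSet G, Submonoid (N X),
      (∀ {X Y : FinGSet G} (f : X.carrier → Y.carrier) (hf : IsEquivariant f),
        ∀ s ∈ S' Y, M.res f hf s ∈ S' X) →
      (∀ {X Y : FinGSet G} (f : X.carrier → Y.carrier) (hf : IsEquivariant f),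
        ∀ s ∈ S' X, M.tr f hf s ∈ S' Y) →
      (∀ X : FinGSet G, satSet (S' X : Set (N X)) = (S' X : Set (N X))) →
      S' (ptObj G) = S (ptObj G) → ∀ X : FinGSet G, S' X = S X) := by
  constructor
  · exact fun X => sat_key M S hres htr hsat X
  · intro S' hres' htr' hsat' hpt X
    have k1 := sat_key M S hres htr hsat X
    have k2 := sat_key M S' hres' htr' hsat' X
    exact SetLike.coe_injective (by rw [k2, k1, hpt])
end

section
/- Let G be a finite group, M and M' semi-Mackey functors on G, and 𝒮 ⊆ M a semi-Mackey subfunctor. Then precomposition with the localization morphism ℓ_𝒮 : M → 𝒮⁻¹M gives a bijection between morphisms of semi-Mackey functors 𝒮⁻¹M → M' and those morphisms ϑ : M → M' satisfying ϑ_X(𝒮(X)) ⊆ (M'(X))^× for all finite G-sets X. -/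
/-- A morphism of semi-Mackey functors: a family of monoid homomorphisms
commuting with restrictions and transfers. -/
structure SMHom {G : Type} [Group G] {N N' : FinGSet G → Type}
    [∀ X, CommMonoid (N X)] [∀ X, CommMonoid (N' X)]
    (M : SemiMackey G N) (M' : SemiMackey G N') where
  app : ∀ X : FinGSet G, N X →* N' X
  res_comm : ∀ {X Y : FinGSet G} (f : X.carrier → Y.carrier) (hf : IsEquivariant f)
    (m : N Y), app X (M.res f hf m) = M'.res f hf (app Y m)
  tr_comm : ∀ {X Y : FinGSet G} (f : X.carrier → Y.carrier) (hf : IsEquivariant f)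
    (m : N X), app Y (M.tr f hf m) = M'.tr f hf (app X m)

/-- Universal property of the localization `𝒮⁻¹M` of a semi-Mackey functor `M`
at a semi-Mackey subfunctor `𝒮`: precomposition with `ℓ_𝒮` is a bijection
between morphisms `𝒮⁻¹M → M'` and morphisms `ϑ : M → M'` with
`ϑ(𝒮) ⊆ M'^×`. -/
theorem semiMackey_localization_universal {G : Type} [Group G]
    {N N' : FinGSet G → Type} [∀ X, CommMonoid (N X)] [∀ X, CommMonoid (N' X)]
    (M : SemiMackey G N) (M' : SemiMackey G N')
    (S : ∀ X : FinGSet G, Submonoid (N X))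
    (hres : ∀ {X Y : FinGSet G} (f : X.carrier → Y.carrier) (hf : IsEquivariant f),
      ∀ s ∈ S Y, M.res f hf s ∈ S X)
    (htr : ∀ {X Y : FinGSet G} (f : X.carrier → Y.carrier) (hf : IsEquivariant f),
      ∀ s ∈ S X, M.tr f hf s ∈ S Y)
    (L : SemiMackey G (fun X => Localization (S X)))
    (hLres : ∀ (X Y : FinGSet G) (f : X.carrier → Y.carrier) (hf : IsEquivariant f)
      (m : N Y), L.res f hf ((Localization.monoidOf (S Y)).toMonoidHom m)
        = (Localization.monoidOf (S X)).toMonoidHom (M.res f hf m))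
    (hLtr : ∀ (X Y : FinGSet G) (f : X.carrier → Y.carrier) (hf : IsEquivariant f)
      (m : N X), L.tr f hf ((Localization.monoidOf (S X)).toMonoidHom m)
        = (Localization.monoidOf (S Y)).toMonoidHom (M.tr f hf m)) :
    (∀ θ : SMHom L M', ∀ X : FinGSet G, ∀ s ∈ S X,
      IsUnit (θ.app X ((Localization.monoidOf (S X)).toMonoidHom s))) ∧
    (∀ ϑ : SMHom M M', (∀ X : FinGSet G, ∀ s ∈ S X, IsUnit (ϑ.app X s)) →
      ∃! θ : SMHom L M', ∀ (X : FinGSet G) (m : N X),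
        θ.app X ((Localization.monoidOf (S X)).toMonoidHom m) = ϑ.app X m) := by
  constructor
  · intro θ X s hs
    exact ((Localization.monoidOf (S X)).map_units ⟨s, hs⟩).map (θ.app X)
  · intro ϑ hϑ
    have hu : ∀ X : FinGSet G, ∀ y : S X, IsUnit (ϑ.app X y) := fun X y => hϑ X y y.2
    refine ⟨⟨fun X => (Localization.monoidOf (S X)).lift (hu X), ?_, ?_⟩, ?_, ?_⟩
    · intro X Y f hf m
      have := DFunLike.congr_fun
        ((Localization.monoidOf (S Y)).epic_of_localizationMap
          (j := ((Localization.monoidOf (S X)).lift (hu X)).comp (L.res f hf))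
          (k := (M'.res f hf).comp ((Localization.monoidOf (S Y)).lift (hu Y)))
          (MonoidHom.ext fun a => by
            simp only [MonoidHom.comp_apply, hLres]; simp only [Submonoid.LocalizationMap.toMonoidHom_apply,
              Submonoid.LocalizationMap.lift_eq, ϑ.res_comm])) m
      simpa using this
    · intro X Y f hf m
      have := DFunLike.congr_fun
        ((Localization.monoidOf (S X)).epic_of_localizationMap
          (j := ((Localization.monoidOf (S Y)).lift (hu Y)).comp (L.tr f hf))
          (k := (M'.tr f hf).comp ((Localization.monoidOf (S X)).lift (hu X)))
          (MonoidHom.ext fun a => by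
            simp only [MonoidHom.comp_apply, hLtr]; simp only [Submonoid.LocalizationMap.toMonoidHom_apply,
              Submonoid.LocalizationMap.lift_eq, ϑ.tr_comm])) m
      simpa using this
    · intro X m
      exact (Localization.monoidOf (S X)).lift_eq (hu X) m
    · intro θ hθ
      cases θ with
      | mk app rc tc =>
        congr 1
        funext X
        exact ((Localization.monoidOf (S X)).epic_of_localizationMap
          (j := app X) (k := (Localization.monoidOf (S X)).lift (hu X))
          (MonoidHom.ext fun a => by
            simp only [MonoidHom.comp_apply, Submonoid.LocalizationMap.toMonoidHom_apply, Submonoid.LocalizationMap.lift_eq]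
            exact hθ X a)).symm ▸ rfl
end
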